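/- Let p_0, p_1 ∈ K and q_0, q_1 ∈ K satisfy p_0 p_1 (p_0 − p_1) ≠ 0 and q_0 q_1 (q_0 − q_1) ≠ 0. Then the tuples ([e_2], [e_0], [e_1], [e_0+e_1], [p_0 e_0 + p_1 e_1]) and ([e_2], [e_0], [e_1], [e_0+e_1], [q_0 e_0 + q_1 e_1]) in ℙ(K^4)^5 are in the same GL_4-orbit if and only if there exists c ∈ K, c ≠ 0, with q_0 = c · p_0 and q_1 = c · p_1. -/

import Mathlib

open scoped LinearAlgebra.Projectivization

/-- Two tuples of points are in the same `GL_n`-orbit. -/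
def SameOrbit {K : Type*} [Field K] {n m : ℕ}
    (v w : Fin m → ℙ K (Fin n → K)) : Prop :=
  ∃ g : (Fin n → K) ≃ₗ[K] (Fin n → K),
    ∀ i, w i = Projectivization.map g.toLinearMap g.injective (v i)

lemma ne_zero_of_apply_ne_zero {K : Type*} [Field K] {n : ℕ} {u : Fin n → K} {i : Fin n}
    (h : u i ≠ 0) : u ≠ 0 := fun h0 => h (by rw [h0]; rfl)

/-- the tuples `([e₂],[e₀],[e₁],[e₀+e₁],[p])` and `([e₂],[e₀],[e₁],[e₀+e₁],[q])`
with `p, q` generic in the line `⟨e₀,e₁⟩` are in the same `GL_4`-orbit iff `q` is a nonzero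
scalar multiple of `p`. -/
theorem sameOrbit_iff_proportional_5_5 (K : Type*) [Field K] [IsAlgClosed K] [CharZero K]
    (p₀ p₁ q₀ q₁ : K)
    (hp : p₀ * p₁ * (p₀ - p₁) ≠ 0) (hq : q₀ * q₁ * (q₀ - q₁) ≠ 0) :
    SameOrbit
      ![Projectivization.mk K ![0,0,1,0] (ne_zero_of_apply_ne_zero (i := 2) (by first | exact one_ne_zero | exact (show (![0,0,1,0] : Fin 4 → K) 2 = 1 from rfl) ▸ one_ne_zero | simp [Matrix.cons_val])),
        Projectivization.mk K ![1,0,0,0] (ne_zero_of_apply_ne_zero (i := 0) (by norm_num)),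
        Projectivization.mk K ![0,1,0,0] (ne_zero_of_apply_ne_zero (i := 1) (by norm_num)),
        Projectivization.mk K ![1,1,0,0] (ne_zero_of_apply_ne_zero (i := 0) (by norm_num)),
        Projectivization.mk K ![p₀,p₁,0,0] (ne_zero_of_apply_ne_zero (i := 0) (by
          simpa using left_ne_zero_of_mul (left_ne_zero_of_mul hp)))]
      ![Projectivization.mk K ![0,0,1,0] (ne_zero_of_apply_ne_zero (i := 2) (by first | exact one_ne_zero | exact (show (![0,0,1,0] : Fin 4 → K) 2 = 1 from rfl) ▸ one_ne_zero | simp [Matrix.cons_val])),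
        Projectivization.mk K ![1,0,0,0] (ne_zero_of_apply_ne_zero (i := 0) (by norm_num)),
        Projectivization.mk K ![0,1,0,0] (ne_zero_of_apply_ne_zero (i := 1) (by norm_num)),
        Projectivization.mk K ![1,1,0,0] (ne_zero_of_apply_ne_zero (i := 0) (by norm_num)),
        Projectivization.mk K ![q₀,q₁,0,0] (ne_zero_of_apply_ne_zero (i := 0) (by
          simpa using left_ne_zero_of_mul (left_ne_zero_of_mul hq)))]
    ↔ ∃ c : K, c ≠ 0 ∧ q₀ = c * p₀ ∧ q₁ = c * p₁ := by
  have hp0 : p₀ ≠ 0 := by simpa using left_ne_zero_of_mul (left_ne_zero_of_mul hp)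
  have hp1 : p₁ ≠ 0 := by simpa using right_ne_zero_of_mul (left_ne_zero_of_mul hp)
  have hq0 : q₀ ≠ 0 := by simpa using left_ne_zero_of_mul (left_ne_zero_of_mul hq)
  constructor
  · rintro ⟨g, h⟩
    have h1 := h 1
    have h2 := h 2
    have h3 := h 3
    have h4 := h 4
    simp only [Projectivization.map_mk, Projectivization.mk_eq_mk_iff',
      Matrix.cons_val_one, Matrix.head_cons, Matrix.cons_val_zero, Matrix.cons_val_two,
      Matrix.cons_val_three, Matrix.cons_val_four, Matrix.tail_cons, Matrix.cons_val_succ,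
      Matrix.cons_val_fin_one, LinearEquiv.coe_coe] at h1 h2 h3 h4
    obtain ⟨a, ha⟩ := h1
    obtain ⟨b, hb⟩ := h2
    obtain ⟨d, hd⟩ := h3
    obtain ⟨u, hu⟩ := h4
    have ha0 : a ≠ 0 := by
      rintro rfl
      have := congrFun ha 0
      simp at this
    have hb0 : b ≠ 0 := by
      rintro rfl
      have := congrFun hb 1
      simp at this
    have hga : g ![1,0,0,0] = a⁻¹ • ![1,0,0,0] := by
      calc g ![1,0,0,0] = a⁻¹ • (a • g ![1,0,0,0]) := by
            rw [smul_smul, inv_mul_cancel₀ ha0, one_smul]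
        _ = a⁻¹ • ![1,0,0,0] := by rw [ha]
    have hgb : g ![0,1,0,0] = b⁻¹ • ![0,1,0,0] := by
      calc g ![0,1,0,0] = b⁻¹ • (b • g ![0,1,0,0]) := by
            rw [smul_smul, inv_mul_cancel₀ hb0, one_smul]
        _ = b⁻¹ • ![0,1,0,0] := by rw [hb]
    have he : (![1,1,0,0] : Fin 4 → K) = ![1,0,0,0] + ![0,1,0,0] := by
      funext i; fin_cases i <;> simp
    have hpv : (![p₀,p₁,0,0] : Fin 4 → K) = p₀ • ![1,0,0,0] + p₁ • ![0,1,0,0] := by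
      funext i; fin_cases i <;> simp
    rw [he, map_add, hga, hgb] at hd
    have hd0 := congrFun hd 0
    have hd1 := congrFun hd 1
    simp at hd0 hd1
    rw [hpv, map_add, map_smul, map_smul, hga, hgb] at hu
    have hu0 := congrFun hu 0
    have hu1 := congrFun hu 1
    simp at hu0 hu1
    have hdne : d ≠ 0 := fun h => by simp [h] at hd0
    have hab : a = b := inv_injective (mul_left_cancel₀ hdne (hd0.trans hd1.symm))
    refine ⟨u * a⁻¹, ?_, ?_, ?_⟩
    · exact fun h0 => hq0 (by rw [← hu0]; linear_combination p₀ * h0)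
    · rw [← hu0]; ring
    · rw [hab, ← hu1]; ring
  · rintro ⟨c, hc, rfl, rfl⟩
    refine ⟨LinearEquiv.refl K _, fun i => ?_⟩
    fin_cases i
    · rfl
    · rfl
    · rfl
    · rfl
    · exact (Projectivization.mk_eq_mk_iff' K _ _ _ _).2
        ⟨c, by funext j; fin_cases j <;> simp [mul_comm]⟩
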